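/- Let 0 < t < y. Then there exists μ̂ ∈ [y − t, y] with E₁(μ̂, t) = y; that is, the maximum conditional-likelihood equation y = μ + (φ(t−μ) − φ(−t−μ))/Z₁(μ,t) has a solution μ lying between the soft-thresholding value y − t and the hard-thresholding value y. -/

import Mathlib

open MeasureTheory Set Filter Real

/-- Standard Gaussian density `φ(x) = (2π)^{-1/2} exp(-x²/2)`. -/
noncomputable def gpdf (x : ℝ) : ℝ := (Real.sqrt (2 * Real.pi))⁻¹ * Real.exp (-x ^ 2 / 2)

lemma gpdf_eq' : gpdf = fun x => (Real.sqrt (2 * Real.pi))⁻¹ * Real.exp (-(1/2 : ℝ) * x ^ 2) := by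
  funext x; unfold gpdf; ring_nf

lemma gpdf_pos (x : ℝ) : 0 < gpdf x := by
  unfold gpdf; positivity

lemma gpdf_neg (x : ℝ) : gpdf (-x) = gpdf x := by simp [gpdf]

@[fun_prop]
lemma gpdf_continuous : Continuous gpdf := by
  unfold gpdf; fun_prop

lemma gpdf_anti {a b : ℝ} (h : |a| ≤ |b|) : gpdf b ≤ gpdf a := by
  unfold gpdf
  apply mul_le_mul_of_nonneg_left _ (by positivity)
  apply Real.exp_le_exp.2
  have : a ^ 2 ≤ b ^ 2 := by
    calc a ^ 2 = |a| ^ 2 := (sq_abs a).symm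
    _ ≤ |b| ^ 2 := by exact pow_le_pow_left₀ (abs_nonneg a) h 2
    _ = b ^ 2 := sq_abs b
  linarith

lemma integrable_gpdf : Integrable gpdf := by
  rw [gpdf_eq']
  exact (integrable_exp_neg_mul_sq (by norm_num)).const_mul _

lemma integral_gpdf : ∫ x, gpdf x = 1 := by
  rw [gpdf_eq', integral_const_mul, integral_gaussian,
    show (Real.pi / (1/2 : ℝ)) = 2 * Real.pi by ring]
  exact inv_mul_cancel₀ (by positivity)

lemma integrable_id_mul_gpdf : Integrable (fun x => x * gpdf x) := by
  have h := (integrable_mul_exp_neg_mul_sq (by norm_num : (0:ℝ) < 1/2)).const_mul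
    (Real.sqrt (2 * Real.pi))⁻¹
  refine h.congr (Filter.Eventually.of_forall fun x => ?_)
  rw [gpdf_eq']; ring

lemma hasDerivAt_gpdf (x : ℝ) : HasDerivAt gpdf (-x * gpdf x) x := by
  have h1 : HasDerivAt (fun x : ℝ => -x ^ 2 / 2) (-x) x := by
    have := ((hasDerivAt_pow 2 x).neg).div_const 2
    exact this.congr_deriv (by norm_num; ring)
  have h2 := (h1.exp).const_mul (Real.sqrt (2 * Real.pi))⁻¹
  have he : -x * gpdf x = (Real.sqrt (2 * Real.pi))⁻¹ * (Real.exp (-x ^ 2 / 2) * -x) := by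
    unfold gpdf; ring
  rw [he]; exact h2

lemma tendsto_gpdf_atTop : Tendsto gpdf atTop (nhds 0) := by
  rw [gpdf_eq']
  have h1 : Tendsto (fun x : ℝ => -(1/2 : ℝ) * x ^ 2) atTop atBot := by
    have : Tendsto (fun x : ℝ => x ^ 2) atTop atTop := tendsto_pow_atTop two_ne_zero
    have h := this.const_mul_atTop (by norm_num : (0:ℝ) < 1/2)
    have := tendsto_neg_atTop_atBot.comp h
    refine this.congr fun x => ?_
    show -((1/2 : ℝ) * x ^ 2) = -(1/2 : ℝ) * x ^ 2
    ring
  have := Real.tendsto_exp_atBot.comp h1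
  simpa using this.const_mul (Real.sqrt (2 * Real.pi))⁻¹

lemma tendsto_gpdf_atBot : Tendsto gpdf atBot (nhds 0) := by
  have := tendsto_gpdf_atTop.comp tendsto_neg_atBot_atTop
  refine this.congr fun x => by simp [Function.comp, gpdf_neg]

/-- Standard Gaussian CDF `Φ(x)`. -/
noncomputable def gcdf (x : ℝ) : ℝ := ∫ t in Set.Iic x, gpdf t

lemma gcdf_nonneg (x : ℝ) : 0 ≤ gcdf x :=
  setIntegral_nonneg measurableSet_Iic fun y _ => (gpdf_pos y).le

lemma gcdf_lt_one (x : ℝ) : gcdf x < 1 := by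
  have h := intervalIntegral.integral_Iic_add_Ioi (b := x) integrable_gpdf.integrableOn integrable_gpdf.integrableOn
  rw [integral_gpdf] at h
  have hpos : 0 < ∫ y in Ioi x, gpdf y := by
    rw [setIntegral_pos_iff_support_of_nonneg_ae
      (Filter.Eventually.of_forall fun y => (gpdf_pos y).le) integrable_gpdf.integrableOn]
    have hs : Function.support gpdf ∩ Ioi x = Ioi x := by
      apply inter_eq_self_of_subset_right
      intro y _; exact (gpdf_pos y).ne'
    rw [hs, Real.volume_Ioi]
    exact ENNReal.zero_lt_top

  have : gcdf x = ∫ y in Iic x, gpdf y := rfl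
  linarith

@[fun_prop]
lemma continuous_gcdf : Continuous gcdf := by
  have key : ∀ b, gcdf b = gcdf 0 + ∫ x in (0:ℝ)..b, gpdf x := by
    intro b
    have h := intervalIntegral.integral_Iic_sub_Iic (μ := volume) (a := (0:ℝ)) (b := b)
      integrable_gpdf.integrableOn integrable_gpdf.integrableOn
    have h0 : gcdf b = ∫ x in Iic b, gpdf x := rfl
    have h1 : gcdf 0 = ∫ x in Iic (0:ℝ), gpdf x := rfl
    linarith
  rw [show gcdf = fun b => gcdf 0 + ∫ x in (0:ℝ)..b, gpdf x from funext key]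
  exact continuous_const.add (integrable_gpdf.continuous_primitive 0)

/-- Normalizing constant `Z₁(μ,t) = 1 - Φ(t-μ) + Φ(-t-μ)`. -/
noncomputable def Z1 (μ t : ℝ) : ℝ := 1 - gcdf (t - μ) + gcdf (-t - μ)

lemma Z1_pos (μ t : ℝ) : 0 < Z1 μ t := by
  have h1 := gcdf_lt_one (t - μ)
  have h2 := gcdf_nonneg (-t - μ)
  unfold Z1; linarith

lemma tendsto_sub_const_atTop (μ : ℝ) : Tendsto (fun x : ℝ => x - μ) atTop atTop :=
  tendsto_atTop_add_const_right atTop (-μ) tendsto_id |>.congr fun x => by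
    simp only [id_eq]; ring

lemma tendsto_sub_const_atBot (μ : ℝ) : Tendsto (fun x : ℝ => x - μ) atBot atBot :=
  tendsto_atBot_add_const_right atBot (-μ) tendsto_id |>.congr fun x => by
    simp only [id_eq]; ring

lemma hasDerivAt_neg_gpdf_sub (μ x : ℝ) :
    HasDerivAt (fun x => -gpdf (x - μ)) ((x - μ) * gpdf (x - μ)) x := by
  have h := ((hasDerivAt_gpdf (x - μ)).comp x ((hasDerivAt_id x).sub_const μ)).neg
  exact h.congr_deriv (by ring)

lemma integral_Ioi_id_mul_gpdf (a μ : ℝ) :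
    ∫ x in Ioi a, (x - μ) * gpdf (x - μ) = gpdf (a - μ) := by
  have hint : IntegrableOn (fun x => (x - μ) * gpdf (x - μ)) (Ioi a) :=
    (integrable_id_mul_gpdf.comp_sub_right μ).integrableOn
  have htend : Tendsto (fun x => -gpdf (x - μ)) atTop (nhds 0) := by
    have := (tendsto_gpdf_atTop.comp (tendsto_sub_const_atTop μ)).neg
    simpa using this
  rw [integral_Ioi_of_hasDerivAt_of_tendsto'
    (fun x _ => hasDerivAt_neg_gpdf_sub μ x) hint htend]
  ring

lemma integral_Iic_id_mul_gpdf (a μ : ℝ) :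
    ∫ x in Iic a, (x - μ) * gpdf (x - μ) = -gpdf (a - μ) := by
  have hint : IntegrableOn (fun x => (x - μ) * gpdf (x - μ)) (Iic a) :=
    (integrable_id_mul_gpdf.comp_sub_right μ).integrableOn
  have htend : Tendsto (fun x => -gpdf (x - μ)) atBot (nhds 0) := by
    have := (tendsto_gpdf_atBot.comp (tendsto_sub_const_atBot μ)).neg
    simpa using this
  rw [integral_Iic_of_hasDerivAt_of_tendsto'
    (fun x _ => hasDerivAt_neg_gpdf_sub μ x) hint htend]
  ring

lemma integral_Iic_gpdf_sub (a μ : ℝ) : ∫ x in Iic a, gpdf (x - μ) = gcdf (a - μ) := by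
  have h1 : gcdf (a - μ) = ∫ x, Set.indicator (Iic (a - μ)) gpdf x := by
    rw [integral_indicator measurableSet_Iic]; rfl
  have h2 : ∫ x in Iic a, gpdf (x - μ)
      = ∫ x, Set.indicator (Iic a) (fun x => gpdf (x - μ)) x := by
    rw [integral_indicator measurableSet_Iic]
  rw [h1, h2, ← integral_sub_right_eq_self (Set.indicator (Iic (a - μ)) gpdf) μ]
  congr 1; funext x
  by_cases h : x ≤ a
  · rw [Set.indicator_of_mem (by simpa using h),
      Set.indicator_of_mem (show x - μ ∈ Iic (a - μ) by simp; linarith)]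
  · rw [Set.indicator_of_notMem (by simpa using h),
      Set.indicator_of_notMem (show x - μ ∉ Iic (a - μ) by simp; linarith)]

lemma integral_Ioi_gpdf_sub (a μ : ℝ) : ∫ x in Ioi a, gpdf (x - μ) = 1 - gcdf (a - μ) := by
  have hi : Integrable (fun x => gpdf (x - μ)) := integrable_gpdf.comp_sub_right μ
  have h := intervalIntegral.integral_Iic_add_Ioi (b := a) hi.integrableOn hi.integrableOn
  have htot : ∫ x, gpdf (x - μ) = 1 := by
    rw [integral_sub_right_eq_self gpdf μ]; exact integral_gpdf
  rw [integral_Iic_gpdf_sub, htot] at h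
  linarith

/-- Mean of `N(μ,1)` conditioned on the two-sided tail `(-∞,-t] ∪ [t,∞)`. -/
noncomputable def E1 (μ t : ℝ) : ℝ :=
  (Z1 μ t)⁻¹ * ∫ x in {x : ℝ | t ≤ |x|}, x * gpdf (x - μ)

lemma integrable_id_mul_gpdf_sub (μ : ℝ) : Integrable (fun x => x * gpdf (x - μ)) := by
  have h1 : Integrable (fun x => (x - μ) * gpdf (x - μ)) := integrable_id_mul_gpdf.comp_sub_right μ
  have h2 : Integrable (fun x => μ * gpdf (x - μ)) := (integrable_gpdf.comp_sub_right μ).const_mul μ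
  exact (h1.add h2).congr (Filter.Eventually.of_forall fun x => by
    simp only [Pi.add_apply]; ring)

lemma E1_eq (μ t : ℝ) (ht : 0 < t) :
    E1 μ t = μ + (gpdf (t - μ) - gpdf (t + μ)) / Z1 μ t := by
  have hset : {x : ℝ | t ≤ |x|} = Iic (-t) ∪ Ici t := by
    ext x
    simp only [mem_setOf_eq, le_abs, mem_union, mem_Iic, mem_Ici]
    constructor
    · rintro (h | h)
      · right; exact h
      · left; linarith
    · rintro (h | h)
      · right; linarith
      · left; exact h
  have hdisj : Disjoint (Iic (-t)) (Ici t) := by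
    apply Set.disjoint_left.2
    intro x hx hx'
    simp only [mem_Iic, mem_Ici] at hx hx'
    linarith
  have hi := integrable_id_mul_gpdf_sub μ
  rw [E1, hset, setIntegral_union hdisj measurableSet_Ici hi.integrableOn hi.integrableOn]
  have hsplit : ∀ s : Set ℝ, MeasurableSet s → ∫ x in s, x * gpdf (x - μ)
      = (∫ x in s, (x - μ) * gpdf (x - μ)) + μ * ∫ x in s, gpdf (x - μ) := by
    intro s hs
    rw [← integral_const_mul, ← integral_add ((integrable_id_mul_gpdf.comp_sub_right μ).integrableOn)
      (((integrable_gpdf.comp_sub_right μ).const_mul μ).integrableOn)]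
    exact setIntegral_congr_fun hs fun x _ => by ring
  rw [hsplit _ measurableSet_Iic, hsplit _ measurableSet_Ici,
    integral_Ici_eq_integral_Ioi, integral_Ici_eq_integral_Ioi,
    integral_Iic_id_mul_gpdf, integral_Iic_gpdf_sub,
    integral_Ioi_id_mul_gpdf, integral_Ioi_gpdf_sub]
  have hZ := Z1_pos μ t
  have hZdef : Z1 μ t = 1 - gcdf (t - μ) + gcdf (-t - μ) := rfl
  have hgev : gpdf (-t - μ) = gpdf (t + μ) := by
    rw [show -t - μ = -(t + μ) by ring, gpdf_neg]
  field_simp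
  rw [hZdef, hgev]
  ring

lemma key_ineq (μ t : ℝ) (hμ : 0 ≤ μ) (ht : 0 ≤ t) :
    gpdf (t - μ) - gpdf (t + μ) ≤ t * Z1 μ t := by
  have hic : Continuous (fun s : ℝ => s * gpdf s) := continuous_id.mul gpdf_continuous
  -- FTC part
  have hftc : ∫ s in (t - μ)..(t + μ), s * gpdf s = gpdf (t - μ) - gpdf (t + μ) := by
    have hd : ∀ s ∈ uIcc (t - μ) (t + μ), HasDerivAt (fun s => -gpdf s) (s * gpdf s) s := by
      intro s _
      have := (hasDerivAt_gpdf s).neg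
      exact this.congr_deriv (by ring)
    rw [intervalIntegral.integral_eq_sub_of_hasDerivAt hd
      (integrable_id_mul_gpdf.intervalIntegrable)]
    ring
  -- comparison integral
  have hcdf : ∫ s in (t - μ)..(t + μ), t * gpdf s = t * (gcdf (t + μ) - gcdf (t - μ)) := by
    rw [intervalIntegral.integral_const_mul,
      ← intervalIntegral.integral_Iic_sub_Iic integrable_gpdf.integrableOn
        integrable_gpdf.integrableOn]
    rfl
  -- the difference is nonpositive
  have hsub : ∫ s in (t - μ)..(t + μ), (s - t) * gpdf s
      = ∫ v in (0:ℝ)..μ, v * (gpdf (t + v) - gpdf (t - v)) := by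
    have h1 : ∫ s in (t - μ)..(t + μ), (s - t) * gpdf s
        = ∫ v in (-μ)..μ, v * gpdf (t + v) := by
      rw [show ∫ v in (-μ)..μ, v * gpdf (t + v)
          = ∫ v in (-μ)..μ, (fun s => (s - t) * gpdf s) (v + t) from by
        congr 1; funext v; simp only []; ring_nf,
        intervalIntegral.integral_comp_add_right (fun s => (s - t) * gpdf s) t]
      congr 1 <;> ring
    have h2 : ∫ v in (-μ)..(0:ℝ), v * gpdf (t + v) = ∫ v in (0:ℝ)..μ, -(v * gpdf (t - v)) := by
      rw [show ∫ v in (0:ℝ)..μ, -(v * gpdf (t - v))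
          = ∫ v in (0:ℝ)..μ, (fun w => w * gpdf (t + w)) (-v) from by
        congr 1; funext v; simp only []; ring_nf,
        intervalIntegral.integral_comp_neg (fun w => w * gpdf (t + w))]
      simp
    have hii : ∀ a b : ℝ, IntervalIntegrable (fun v => v * gpdf (t + v)) volume a b :=
      fun a b => (by fun_prop : Continuous fun v => v * gpdf (t + v)).intervalIntegrable a b
    have hii2 : IntervalIntegrable (fun v => v * gpdf (t - v)) volume 0 μ :=
      (by fun_prop : Continuous fun v => v * gpdf (t - v)).intervalIntegrable 0 μ
    have h3 := intervalIntegral.integral_add_adjacent_intervals (a := -μ) (b := 0) (c := μ)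
      (hii _ _) (hii _ _)
    have h2' : ∫ v in (-μ)..(0:ℝ), v * gpdf (t + v) = -∫ v in (0:ℝ)..μ, v * gpdf (t - v) := by
      rw [h2, intervalIntegral.integral_neg]
    have h4 : ∫ v in (0:ℝ)..μ, v * (gpdf (t + v) - gpdf (t - v))
        = (∫ v in (0:ℝ)..μ, v * gpdf (t + v)) - ∫ v in (0:ℝ)..μ, v * gpdf (t - v) := by
      rw [← intervalIntegral.integral_sub (hii 0 μ) hii2]
      congr 1; funext v; ring
    rw [h1, ← h3, h2', h4]; ring
  have hnonpos : ∫ v in (0:ℝ)..μ, v * (gpdf (t + v) - gpdf (t - v)) ≤ 0 := by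
    have h := intervalIntegral.integral_nonneg (μ := volume)
      (f := fun v => -(v * (gpdf (t + v) - gpdf (t - v)))) hμ ?_
    · have : ∫ v in (0:ℝ)..μ, -(v * (gpdf (t + v) - gpdf (t - v)))
          = -∫ v in (0:ℝ)..μ, v * (gpdf (t + v) - gpdf (t - v)) := by
        rw [intervalIntegral.integral_neg]
      linarith [this ▸ h]
    · intro v hv
      simp only [mem_Icc] at hv
      have hle : gpdf (t + v) ≤ gpdf (t - v) := by
        apply gpdf_anti
        rw [abs_of_nonneg (by linarith : 0 ≤ t + v)]
        have := abs_sub_abs_le_abs_sub t v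
        calc |t - v| ≤ |t| + |v| := abs_sub t v
        _ = t + v := by rw [abs_of_nonneg ht, abs_of_nonneg hv.1]
      show 0 ≤ -(v * (gpdf (t + v) - gpdf (t - v)))
      nlinarith [hv.1, hle]
  -- combine
  have hdecomp : ∫ s in (t - μ)..(t + μ), s * gpdf s
      = (∫ s in (t - μ)..(t + μ), (s - t) * gpdf s) + ∫ s in (t - μ)..(t + μ), t * gpdf s := by
    rw [← intervalIntegral.integral_add
      ((by fun_prop : Continuous fun s => (s - t) * gpdf s).intervalIntegrable _ _)
      ((by fun_prop : Continuous fun s => t * gpdf s).intervalIntegrable _ _)]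
    congr 1; funext s; ring
  have h1 : gcdf (t + μ) < 1 := gcdf_lt_one _
  have h2 : 0 ≤ gcdf (-t - μ) := gcdf_nonneg _
  have hZ : Z1 μ t = 1 - gcdf (t - μ) + gcdf (-t - μ) := rfl
  nlinarith [hftc, hcdf, hsub, hnonpos, hdecomp]

/-- For `0 < t < y`, the maximum conditional-likelihood equation `E₁(μ,t) = y` has a
solution `μ̂` lying between the soft-thresholding value `y - t` and the
hard-thresholding value `y`. -/
theorem truncGauss_estimator_exists (t y : ℝ) (ht : 0 < t) (hty : t < y) :
    ∃ μhat ∈ Set.Icc (y - t) y, E1 μhat t = y := by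
  set f : ℝ → ℝ := fun μ => E1 μ t with hfdef
  have hfe : ∀ μ, f μ = μ + (gpdf (t - μ) - gpdf (t + μ)) / Z1 μ t := fun μ => E1_eq μ t ht
  have hZcont : Continuous fun μ => Z1 μ t := by
    unfold Z1; fun_prop
  have hcont : ContinuousOn f (Icc (y - t) y) := by
    rw [show f = fun μ => μ + (gpdf (t - μ) - gpdf (t + μ)) / Z1 μ t from funext hfe]
    exact (continuous_id.add ((Continuous.div (by fun_prop) hZcont
      fun μ => (Z1_pos μ t).ne'))).continuousOn
  have h1 : f (y - t) ≤ y := by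
    rw [hfe]
    have hkey := key_ineq (y - t) t (by linarith) ht.le
    have hZ := Z1_pos (y - t) t
    have hdiv : (gpdf (t - (y - t)) - gpdf (t + (y - t))) / Z1 (y - t) t ≤ t := by
      rw [div_le_iff₀ hZ]; linarith
    linarith
  have h2 : y ≤ f y := by
    rw [hfe]
    have hZ := Z1_pos y t
    have hnum : 0 ≤ gpdf (t - y) - gpdf (t + y) := by
      have hle : gpdf (t + y) ≤ gpdf (t - y) := by
        apply gpdf_anti
        rw [abs_of_nonpos (by linarith : t - y ≤ 0), abs_of_nonneg (by linarith : (0:ℝ) ≤ t + y)]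
        linarith
      linarith
    have := div_nonneg hnum hZ.le
    linarith
  obtain ⟨μhat, hmem, heq⟩ := intermediate_value_Icc (by linarith : y - t ≤ y) hcont ⟨h1, h2⟩
  exact ⟨μhat, hmem, heq⟩
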